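/- Let u : ℝ³ → ℝ be Euclidean C²-smooth and x a non-characteristic point of Σ = {u = 0}. Then the limit as L → +∞ of the mean curvature H_{∇,L}(x) of Σ associated to the first Schouten–Van Kampen affine connection exists and equals X₁(p̄)(x) + X₂(q̄)(x). -/

import Mathlib

open Filter Real Topology

/-- The horizontal vector field `X₁ = ∂_{x₁} - (x₂/2)∂_{x₃}` acting on a function. -/
noncomputable def X1 (f : ℝ → ℝ → ℝ → ℝ) (x y z : ℝ) : ℝ :=
  deriv (fun s => f s y z) x - (y / 2) * deriv (fun s => f x y s) z

/-- The horizontal vector field `X₂ = ∂_{x₂} + (x₁/2)∂_{x₃}` acting on a function. -/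
noncomputable def X2 (f : ℝ → ℝ → ℝ → ℝ) (x y z : ℝ) : ℝ :=
  deriv (fun s => f x s z) y + (x / 2) * deriv (fun s => f x y s) z

/-- The vertical vector field `X₃ = ∂_{x₃}` acting on a function. -/
noncomputable def X3 (f : ℝ → ℝ → ℝ → ℝ) (x y z : ℝ) : ℝ :=
  deriv (fun s => f x y s) z

theorem tendsto_sqrt_atTop' : Filter.Tendsto Real.sqrt Filter.atTop Filter.atTop := by
  apply Filter.tendsto_atTop_atTop.mpr
  intro b
  refine ⟨b ^ 2, fun a ha => ?_⟩
  calc b ≤ |b| := le_abs_self b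
    _ = Real.sqrt (b ^ 2) := (Real.sqrt_sq_eq_abs b).symm
    _ ≤ Real.sqrt a := Real.sqrt_le_sqrt ha

theorem mean_curvature_limit_first_SvK
    (u pb qb : ℝ → ℝ → ℝ → ℝ) (rbF rol : ℝ → ℝ → ℝ → ℝ → ℝ)
    (lL H : ℝ → ℝ) (l0 x y z : ℝ)
    (hu : ContDiff ℝ 2 (fun v : ℝ × ℝ × ℝ => u v.1 v.2.1 v.2.2))
    (hx : u x y z = 0)
    (hl0 : l0 = Real.sqrt ((X1 u x y z)^2 + (X2 u x y z)^2))
    (hnc : l0 ≠ 0)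
    (hpb : ∀ a b c, pb a b c = X1 u a b c / Real.sqrt ((X1 u a b c)^2 + (X2 u a b c)^2))
    (hqb : ∀ a b c, qb a b c = X2 u a b c / Real.sqrt ((X1 u a b c)^2 + (X2 u a b c)^2))
    (hrbF : ∀ L a b c, rbF L a b c = (X3 u a b c / Real.sqrt L) /
      Real.sqrt ((X1 u a b c)^2 + (X2 u a b c)^2 + (X3 u a b c / Real.sqrt L)^2))
    (hrol : ∀ L a b c, rol L a b c = (X3 u a b c / Real.sqrt L) /
      Real.sqrt ((X1 u a b c)^2 + (X2 u a b c)^2))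
    (hlL : ∀ L, lL L = Real.sqrt ((X1 u x y z)^2 + (X2 u x y z)^2
      + (X3 u x y z / Real.sqrt L)^2))
    (hH : ∀ L, H L = (l0 / lL L) * (X1 pb x y z + X2 qb x y z)
      - (l0^2 / (lL L)^2) * (rbF L x y z * pb x y z * X1 (rol L) x y z
          + rbF L x y z * qb x y z * X2 (rol L) x y z)
      + (1 / Real.sqrt L) * X3 (rbF L) x y z) :
    Filter.Tendsto (fun L => H L) Filter.atTop (nhds (X1 pb x y z + X2 qb x y z)) := by
  classical
  set p0 : ℝ := X1 u x y z with hp0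
  set q0 : ℝ := X2 u x y z with hq0
  set w0 : ℝ := X3 u x y z with hw0
  have hl0pos : 0 < l0 := lt_of_le_of_ne (hl0 ▸ Real.sqrt_nonneg _) (Ne.symm hnc)
  have hpq : 0 < p0 ^ 2 + q0 ^ 2 := Real.sqrt_pos.mp (hl0 ▸ hl0pos)
  -- basic tendsto facts
  have ht : Tendsto (fun L : ℝ => 1 / Real.sqrt L) atTop (𝓝 0) := by
    rw [show (fun L : ℝ => 1 / Real.sqrt L) = Real.sqrt⁻¹ from funext fun L => by simp [one_div]]
    exact tendsto_sqrt_atTop'.inv_tendsto_atTop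
  have hdivt : ∀ a : ℝ, Tendsto (fun L : ℝ => a / Real.sqrt L) atTop (𝓝 0) := by
    intro a
    have := ht.const_mul a
    simpa [div_eq_mul_inv] using this
  have hmt : Tendsto lL atTop (𝓝 l0) := by
    have h2 : Tendsto (fun L : ℝ => p0 ^ 2 + q0 ^ 2 + (w0 / Real.sqrt L) ^ 2) atTop
        (𝓝 (p0 ^ 2 + q0 ^ 2 + 0 ^ 2)) :=
      tendsto_const_nhds.add ((hdivt w0).pow 2)
    have h3 := (Real.continuous_sqrt.tendsto _).comp h2
    have h4 : Tendsto (fun L : ℝ => Real.sqrt (p0 ^ 2 + q0 ^ 2 + (w0 / Real.sqrt L) ^ 2)) atTop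
        (𝓝 l0) := by
      convert h3 using 1
      · rfl
      rw [hl0]; norm_num
    exact h4.congr fun L => (hlL L).symm
  have hlLge : ∀ L, l0 ≤ lL L := by
    intro L
    rw [hlL L, hl0]
    exact Real.sqrt_le_sqrt (by nlinarith [sq_nonneg (w0 / Real.sqrt L)])
  have hlLpos : ∀ L, 0 < lL L := fun L => lt_of_lt_of_le hl0pos (hlLge L)
  -- derivatives of p, q, w along the vertical line
  set U : ℝ × ℝ × ℝ → ℝ := fun v => u v.1 v.2.1 v.2.2 with hU
  have hUdiff : Differentiable ℝ U := hu.differentiable (by norm_num)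
  have hF : ContDiff ℝ 1 (fderiv ℝ U) := hu.fderiv_right (le_refl 2)
  have hderiv1 : ∀ a b c : ℝ, deriv (fun s => u s b c) a
      = fderiv ℝ U (a, b, c) (1, 0, 0) := by
    intro a b c
    have hj : HasDerivAt (fun s : ℝ => ((s, b, c) : ℝ × ℝ × ℝ)) (1, 0, 0) a :=
      (hasDerivAt_id a).prodMk ((hasDerivAt_const a b).prodMk (hasDerivAt_const a c))
    exact (((hUdiff (a, b, c)).hasFDerivAt).comp_hasDerivAt a hj).deriv
  have hderiv3 : ∀ a b c : ℝ, deriv (fun s => u a b s) c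
      = fderiv ℝ U (a, b, c) (0, 0, 1) := by
    intro a b c
    have hj : HasDerivAt (fun s : ℝ => ((a, b, s) : ℝ × ℝ × ℝ)) (0, 0, 1) c :=
      (hasDerivAt_const c a).prodMk ((hasDerivAt_const c b).prodMk (hasDerivAt_id c))
    exact (((hUdiff (a, b, c)).hasFDerivAt).comp_hasDerivAt c hj).deriv
  have hderiv2 : ∀ a b c : ℝ, deriv (fun s => u a s c) b
      = fderiv ℝ U (a, b, c) (0, 1, 0) := by
    intro a b c
    have hj : HasDerivAt (fun s : ℝ => ((a, s, c) : ℝ × ℝ × ℝ)) (0, 1, 0) b :=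
      (hasDerivAt_const b a).prodMk ((hasDerivAt_id b).prodMk (hasDerivAt_const b c))
    exact (((hUdiff (a, b, c)).hasFDerivAt).comp_hasDerivAt b hj).deriv
  have hline : Differentiable ℝ (fun s : ℝ => fderiv ℝ U (x, y, s)) := by
    have h : ContDiff ℝ 1 (fun s : ℝ => fderiv ℝ U (x, y, s)) :=
      hF.comp (contDiff_const.prodMk (contDiff_const.prodMk contDiff_id))
    exact h.differentiable one_ne_zero
  have happ : ∀ v : ℝ × ℝ × ℝ, Differentiable ℝ (fun s : ℝ => fderiv ℝ U (x, y, s) v) :=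
    fun v => hline.clm_apply (differentiable_const v)
  have eX1 : (fun s : ℝ => X1 u x y s)
      = fun s : ℝ => fderiv ℝ U (x, y, s) (1, 0, 0) - (y / 2) * fderiv ℝ U (x, y, s) (0, 0, 1) := by
    funext s
    simp only [X1, hderiv1 x y s, hderiv3 x y s]
  have eX2 : (fun s : ℝ => X2 u x y s)
      = fun s : ℝ => fderiv ℝ U (x, y, s) (0, 1, 0) + (x / 2) * fderiv ℝ U (x, y, s) (0, 0, 1) := by
    funext s
    simp only [X2, hderiv2 x y s, hderiv3 x y s]
  have eX3 : (fun s : ℝ => X3 u x y s) = fun s : ℝ => fderiv ℝ U (x, y, s) (0, 0, 1) := by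
    funext s
    simp only [X3, hderiv3 x y s]
  obtain ⟨p', hP⟩ : ∃ d, HasDerivAt (fun s : ℝ => X1 u x y s) d z := by
    rw [eX1]
    exact ⟨_, (((happ (1,0,0)).sub ((happ (0,0,1)).const_mul (y/2))) z).hasDerivAt⟩
  obtain ⟨q', hQ⟩ : ∃ d, HasDerivAt (fun s : ℝ => X2 u x y s) d z := by
    rw [eX2]
    exact ⟨_, (((happ (0,1,0)).add ((happ (0,0,1)).const_mul (x/2))) z).hasDerivAt⟩
  obtain ⟨w', hWd⟩ : ∃ d, HasDerivAt (fun s : ℝ => X3 u x y s) d z := by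
    rw [eX3]
    exact ⟨_, ((happ (0,0,1)) z).hasDerivAt⟩
  -- term 1
  have hT1 : Tendsto (fun L => (l0 / lL L) * (X1 pb x y z + X2 qb x y z)) atTop
      (𝓝 (X1 pb x y z + X2 qb x y z)) := by
    have h := Tendsto.div (tendsto_const_nhds : Tendsto (fun _ : ℝ => l0) atTop (𝓝 l0)) hmt hnc
    have h2 := h.mul_const (X1 pb x y z + X2 qb x y z)
    simpa [div_self hnc] using h2
  -- term 2
  set g : ℝ → ℝ → ℝ → ℝ := fun a b c =>
    X3 u a b c / Real.sqrt ((X1 u a b c) ^ 2 + (X2 u a b c) ^ 2) with hg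
  have hrolX1 : ∀ L, X1 (rol L) x y z = (1 / Real.sqrt L) * X1 g x y z := by
    intro L
    have e1 : (fun s => rol L s y z) = fun s => (1 / Real.sqrt L) * g s y z := by
      funext s; rw [hrol, hg]; ring
    have e2 : (fun s => rol L x y s) = fun s => (1 / Real.sqrt L) * g x y s := by
      funext s; rw [hrol, hg]; ring
    simp only [X1, e1, e2, deriv_const_mul_field]
    ring
  have hrolX2 : ∀ L, X2 (rol L) x y z = (1 / Real.sqrt L) * X2 g x y z := by
    intro L
    have e1 : (fun s => rol L x s z) = fun s => (1 / Real.sqrt L) * g x s z := by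
      funext s; rw [hrol, hg]; ring
    have e2 : (fun s => rol L x y s) = fun s => (1 / Real.sqrt L) * g x y s := by
      funext s; rw [hrol, hg]; ring
    simp only [X2, e1, e2, deriv_const_mul_field]
    ring
  have hrbFpt : ∀ L, rbF L x y z = (w0 / Real.sqrt L) / lL L := by
    intro L
    rw [hrbF, ← hp0, ← hq0, ← hw0, ← hlL]
  have hT2 : Tendsto (fun L => (l0 ^ 2 / (lL L) ^ 2) * (rbF L x y z * pb x y z * X1 (rol L) x y z
      + rbF L x y z * qb x y z * X2 (rol L) x y z)) atTop (𝓝 0) := by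
    have hb : Tendsto (fun L => rbF L x y z) atTop (𝓝 0) := by
      have h := ((hdivt w0).div hmt hnc).congr fun L => (hrbFpt L).symm
      simpa using h
    have h1 : Tendsto (fun L => rbF L x y z * pb x y z * X1 (rol L) x y z) atTop (𝓝 0) := by
      have h := (hb.mul_const (pb x y z)).mul (ht.mul_const (X1 g x y z))
      rw [show (0:ℝ) * pb x y z * (0 * X1 g x y z) = 0 by ring] at h
      exact h.congr fun L => by rw [hrolX1 L]
    have h2 : Tendsto (fun L => rbF L x y z * qb x y z * X2 (rol L) x y z) atTop (𝓝 0) := by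
      have h := (hb.mul_const (qb x y z)).mul (ht.mul_const (X2 g x y z))
      rw [show (0:ℝ) * qb x y z * (0 * X2 g x y z) = 0 by ring] at h
      exact h.congr fun L => by rw [hrolX2 L]
    have h3 := Tendsto.div (tendsto_const_nhds : Tendsto (fun _ : ℝ => l0 ^ 2) atTop (𝓝 (l0 ^ 2)))
      (hmt.pow 2) (pow_ne_zero 2 hnc)
    have h4 := h3.mul (h1.add h2)
    simpa using h4
  -- term 3
  set E : ℝ → ℝ := fun L => (1 / Real.sqrt L) *
    (((w' / Real.sqrt L) * lL L - (w0 / Real.sqrt L) *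
      (1 / (2 * lL L) * ((2 : ℕ) * p0 ^ (2-1) * p' + (2 : ℕ) * q0 ^ (2-1) * q'
        + (2 : ℕ) * (w0 / Real.sqrt L) ^ (2-1) * (w' / Real.sqrt L)))) / (lL L) ^ 2) with hE
  have hT3eq : ∀ᶠ L in atTop, (1 / Real.sqrt L) * X3 (rbF L) x y z = E L := by
    filter_upwards [eventually_ge_atTop (1 : ℝ)] with L hL
    have hiz : (X1 u x y z) ^ 2 + (X2 u x y z) ^ 2 + (X3 u x y z / Real.sqrt L) ^ 2 ≠ 0 := by
      have : 0 < p0 ^ 2 + q0 ^ 2 + (w0 / Real.sqrt L) ^ 2 := by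
        nlinarith [sq_nonneg (w0 / Real.sqrt L)]
      rw [← hp0, ← hq0, ← hw0]
      exact ne_of_gt this
    have hin : HasDerivAt (fun s => (X1 u x y s) ^ 2 + (X2 u x y s) ^ 2
        + (X3 u x y s / Real.sqrt L) ^ 2)
        ((2 : ℕ) * (X1 u x y z) ^ (2-1) * p' + (2 : ℕ) * (X2 u x y z) ^ (2-1) * q'
          + (2 : ℕ) * (X3 u x y z / Real.sqrt L) ^ (2-1) * (w' / Real.sqrt L)) z :=
      ((hP.pow 2).add (hQ.pow 2)).add ((hWd.div_const (Real.sqrt L)).pow 2)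
    have hsq := (Real.hasDerivAt_sqrt hiz).comp z hin
    have hden_ne : Real.sqrt ((X1 u x y z) ^ 2 + (X2 u x y z) ^ 2
        + (X3 u x y z / Real.sqrt L) ^ 2) ≠ 0 := by
      rw [← hlL L]; exact ne_of_gt (hlLpos L)
    have hdiv := (hWd.div_const (Real.sqrt L)).div hsq hden_ne
    have hrb : (fun s => rbF L x y s) = fun s => (X3 u x y s / Real.sqrt L) /
        Real.sqrt ((X1 u x y s) ^ 2 + (X2 u x y s) ^ 2 + (X3 u x y s / Real.sqrt L) ^ 2) :=
      funext fun s => hrbF L x y s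
    have hdiv' : HasDerivAt (fun s => rbF L x y s)
        (((w' / Real.sqrt L) * lL L - (w0 / Real.sqrt L) *
          (1 / (2 * lL L) * ((2 : ℕ) * p0 ^ (2-1) * p' + (2 : ℕ) * q0 ^ (2-1) * q'
            + (2 : ℕ) * (w0 / Real.sqrt L) ^ (2-1) * (w' / Real.sqrt L)))) / (lL L) ^ 2) z := by
      rw [hrb, hlL L]
      exact hdiv
    have hval : X3 (rbF L) x y z = ((w' / Real.sqrt L) * lL L - (w0 / Real.sqrt L) *
        (1 / (2 * lL L) * ((2 : ℕ) * p0 ^ (2-1) * p' + (2 : ℕ) * q0 ^ (2-1) * q'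
          + (2 : ℕ) * (w0 / Real.sqrt L) ^ (2-1) * (w' / Real.sqrt L)))) / (lL L) ^ 2 :=
      hdiv'.deriv
    rw [hval, hE]
  have hT3 : Tendsto (fun L => (1 / Real.sqrt L) * X3 (rbF L) x y z) atTop (𝓝 0) := by
    have hEt : Tendsto E atTop (𝓝 (0 * ((0 * l0 - 0 * (1 / (2 * l0) *
        ((2 : ℕ) * p0 ^ (2-1) * p' + (2 : ℕ) * q0 ^ (2-1) * q'
          + (2 : ℕ) * (0 : ℝ) ^ (2-1) * 0))) / l0 ^ 2))) := by
      apply ht.mul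
      apply Tendsto.div _ (hmt.pow 2) (pow_ne_zero 2 hnc)
      apply Tendsto.sub ((hdivt w').mul hmt)
      apply Tendsto.mul (hdivt w0)
      apply Tendsto.mul
      · exact Tendsto.div tendsto_const_nhds (hmt.const_mul 2) (mul_ne_zero two_ne_zero hnc)
      · exact tendsto_const_nhds.add ((((hdivt w0).pow (2-1)).const_mul ((2 : ℕ) : ℝ)).mul (hdivt w'))
    have : Tendsto E atTop (𝓝 0) := by simpa using hEt
    exact Tendsto.congr' (hT3eq.mono fun L h => h.symm) this
  have hfinal := (hT1.sub hT2).add hT3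
  rw [sub_zero, add_zero] at hfinal
  exact hfinal.congr fun L => (hH L).symm
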